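/- Let q⋆ be an optimal k-points NN quantizer for P with codebook c⋆ = {c⋆₁,…,c⋆_k} and let q be a k-points NN quantizer with codebook c = {c₁,…,c_k}. Set M = max_{i≠j} |c⋆_i − c⋆_j|. Assume P(𝔉(c⋆)) = P(𝔉(c)) = 0 and that the identity permutation attains the minimum in the definitions of both F₁(q⋆,q) and F₂(q⋆,q). Then 𝐅(q⋆,q)² ≤ F₁(q⋆,q)² + F₂(q⋆,q)·(F₁(q⋆,q) + M)². -/

import Mathlib

open MeasureTheory Metric Set ENNReal

noncomputable section

variable {E : Type*} [NormedAddCommGroup E] [InnerProductSpace ℝ E] [MeasurableSpace E]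

/-- A `k`-points nearest-neighbor quantizer: a Borel-measurable map whose image is a set of
exactly `k` points and which maps every point to a nearest point of its codebook. -/
def IsNNQuantizer (k : ℕ) (q : E → E) : Prop :=
  Measurable q ∧ (∃ s : Finset E, s.card = k ∧ Set.range q = ↑s) ∧
    ∀ x : E, ∀ c ∈ Set.range q, ‖x - q x‖ ≤ ‖x - c‖

/-- The risk (distortion) of a quantizer with respect to `P`. -/
def risk (P : Measure E) (q : E → E) : ℝ := ∫ x, ‖x - q x‖ ^ 2 ∂P

/-- An optimal `k`-points NN quantizer for `P`. -/
def IsOptimalQuantizer (P : Measure E) (k : ℕ) (q : E → E) : Prop :=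
  IsNNQuantizer k q ∧ ∀ q', IsNNQuantizer k q' → risk P q ≤ risk P q'

/-- The absolute margin condition with parameter `l0` (with respect to the optimal quantizer
`qs`):  (1) the set `A(l0)` has full `P`-measure; (2) for every random variable `Y`
(encoded by a coupling `π` of the law `P` of `X` and the law of `Y`) with
`E|X - Y|² ≤ l0² E|X - qs X|²`, the map `q ↦ E|Y - q Y|²` over `k`-points NN quantizers has a
unique minimizer (uniqueness of its codebook). -/
def AbsoluteMargin (P : Measure E) (k : ℕ) (qs : E → E) (l0 : ℝ) : Prop :=
  P {x | qs (x + l0 • (x - qs x)) = qs x} = 1 ∧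
  ∀ π : Measure (E × E), IsProbabilityMeasure π → π.map Prod.fst = P →
    (∫ p, ‖p.1 - p.2‖ ^ 2 ∂π) ≤ l0 ^ 2 * ∫ x, ‖x - qs x‖ ^ 2 ∂P →
    ∃ q0, IsNNQuantizer k q0 ∧
      (∀ q', IsNNQuantizer k q' → risk (π.map Prod.snd) q0 ≤ risk (π.map Prod.snd) q') ∧
      ∀ q', IsNNQuantizer k q' →
        (∀ q'', IsNNQuantizer k q'' → risk (π.map Prod.snd) q' ≤ risk (π.map Prod.snd) q'') →
        Set.range q' = Set.range q0

/-- Voronoi cell of the `j`-th point of the codebook `c`. -/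
def Vcell (k : ℕ) (c : Fin k → E) (j : Fin k) : Set E := {x | ∀ l, ‖x - c j‖ ≤ ‖x - c l‖}

/-- The frontier of the Voronoi diagram generated by `c`. -/
def VorFrontier (k : ℕ) (c : Fin k → E) : Set E :=
  ⋃ (i) (j) (_ : i ≠ j), Vcell k c i ∩ Vcell k c j

/-- `F₁` between two codebooks: min over permutations of the max distance of matched centers. -/
def F1 (k : ℕ) (c c' : Fin k → E) : ℝ :=
  ⨅ σ : Equiv.Perm (Fin k), ⨆ j, ‖c j - c' (σ j)‖

/-- `F₂` between two codebooks: the minimal `P`-mass of misclassified points. -/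
def F2 (P : Measure E) (k : ℕ) (c c' : Fin k → E) : ℝ :=
  ⨅ σ : Equiv.Perm (Fin k), (P (⋃ j, Vcell k c j ∩ Vcell k c' (σ j))ᶜ).toReal

/-- `max_{i ≠ j} ‖c i - c j‖`. -/
def maxDist (k : ℕ) (c : Fin k → E) : ℝ :=
  ⨆ p : {p : Fin k × Fin k // p.1 ≠ p.2}, ‖c p.1.1 - c p.1.2‖

/-- `min_{i ≠ j} ‖c i - c j‖`. -/
def minDist (k : ℕ) (c : Fin k → E) : ℝ :=
  ⨅ p : {p : Fin k × Fin k // p.1 ≠ p.2}, ‖c p.1.1 - c p.1.2‖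

/-- The function `p⋆(t)` of Definition `def:pstar`, for the optimal codebook `cs` of the
optimal quantizer `qs`. -/
def pstar (P : Measure E) (k : ℕ) (cs : Fin k → E) (qs : E → E) (t : ℝ) : ℝ :=
  (P (⋃ i, {x | minDist k cs * infDist x (frontier (Vcell k cs i)) ≤
      2 * ‖x - qs x‖ * t + 2 * t ^ 2})).toReal

/-- `F₁` between two quantizers, defined through enumerations of their codebooks. -/
def F1Q (k : ℕ) (q q' : E → E) : ℝ :=
  sInf {r | ∃ c c' : Fin k → E, Set.range c = Set.range q ∧ Set.range c' = Set.range q' ∧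
    r = ⨆ j, ‖c j - c' j‖}

/-- upper comparison of `𝐅²` with `F₁` and `F₂` (Subsection `sub:comp`). -/
theorem stmt7 [BorelSpace E] [CompleteSpace E] [SecondCountableTopology E]
    (P : Measure E) [IsProbabilityMeasure P] (k : ℕ) (hk : 1 ≤ k)
    (hmom : Integrable (fun x => ‖x‖ ^ 2) P)
    (hsupp : ∀ s : Finset E, s.card ≤ k → P (↑s : Set E) < 1)
    (qs q : E → E) (cs c : Fin k → E)
    (hcs_inj : Function.Injective cs) (hc_inj : Function.Injective c)
    (hcs_range : Set.range qs = Set.range cs) (hc_range : Set.range q = Set.range c)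
    (hqs : IsOptimalQuantizer P k qs) (hq : IsNNQuantizer k q)
    (hfrontS : P (VorFrontier k cs) = 0) (hfront : P (VorFrontier k c) = 0)
    (hF1id : F1 k cs c = ⨆ j, ‖cs j - c j‖)
    (hF2id : F2 P k cs c = (P (⋃ j, Vcell k cs j ∩ Vcell k c j)ᶜ).toReal) :
    ∫ x, ‖q x - qs x‖ ^ 2 ∂P ≤
      F1 k cs c ^ 2 + F2 P k cs c * (F1 k cs c + maxDist k cs) ^ 2 := by
  classical
  have hk' : Nonempty (Fin k) := ⟨⟨0, hk⟩⟩
  set G : Set E := ⋃ j, Vcell k cs j ∩ Vcell k c j with hGdef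
  -- Voronoi cells are closed, hence measurable
  have hVclosed : ∀ (d : Fin k → E) j, IsClosed (Vcell k d j) := by
    intro d j
    have hEq : Vcell k d j = ⋂ l, {x : E | ‖x - d j‖ ≤ ‖x - d l‖} := by
      ext x; simp [Vcell, Set.mem_iInter]
    rw [hEq]
    exact isClosed_iInter fun l => isClosed_le (by fun_prop) (by fun_prop)
  have hGmeas : MeasurableSet G :=
    MeasurableSet.iUnion fun j =>
      ((hVclosed cs j).measurableSet.inter (hVclosed c j).measurableSet)
  set F₁ : ℝ := F1 k cs c with hF₁def
  set M : ℝ := maxDist k cs with hMdef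
  have hF1le : ∀ j, ‖cs j - c j‖ ≤ F₁ := by
    intro j
    rw [hF1id]
    exact le_ciSup (f := fun j => ‖cs j - c j‖) (Finite.bddAbove_range _) j
  have hF1nonneg : 0 ≤ F₁ :=
    le_trans (norm_nonneg _) (hF1le (Classical.arbitrary _))
  have hMnonneg : 0 ≤ M := Real.iSup_nonneg fun p => norm_nonneg _
  have hMle : ∀ i j, i ≠ j → ‖cs i - cs j‖ ≤ M := by
    intro i j hij
    show ‖cs i - cs j‖ ≤ ⨆ p : {p : Fin k × Fin k // p.1 ≠ p.2}, ‖cs p.1.1 - cs p.1.2‖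
    exact le_ciSup (f := fun p : {p : Fin k × Fin k // p.1 ≠ p.2} => ‖cs p.1.1 - cs p.1.2‖)
      (Finite.bddAbove_range _) ⟨(i, j), hij⟩
  -- every point lies in the Voronoi cell of its image
  have hq_mem : ∀ x, ∃ i, q x = c i ∧ x ∈ Vcell k c i := by
    intro x
    obtain ⟨i, hi⟩ : q x ∈ Set.range c := by rw [← hc_range]; exact ⟨x, rfl⟩
    refine ⟨i, hi.symm, fun l => ?_⟩
    rw [hi]
    exact hq.2.2 x (c l) (by rw [hc_range]; exact ⟨l, rfl⟩)
  have hqs_mem : ∀ x, ∃ j, qs x = cs j ∧ x ∈ Vcell k cs j := by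
    intro x
    obtain ⟨j, hj⟩ : qs x ∈ Set.range cs := by rw [← hcs_range]; exact ⟨x, rfl⟩
    refine ⟨j, hj.symm, fun l => ?_⟩
    rw [hj]
    exact hqs.1.2.2 x (cs l) (by rw [hcs_range]; exact ⟨l, rfl⟩)
  have hae : ∀ᵐ x ∂P, x ∉ VorFrontier k cs ∪ VorFrontier k c := by
    have hN : P (VorFrontier k cs ∪ VorFrontier k c) = 0 :=
      measure_union_null hfrontS hfront
    rw [ae_iff]
    have hset : {x | ¬ x ∉ VorFrontier k cs ∪ VorFrontier k c}
        = VorFrontier k cs ∪ VorFrontier k c := by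
      ext x; simp only [Set.mem_setOf_eq, not_not]
    rw [hset]; exact hN
  set g : E → ℝ := fun x => F₁ ^ 2 + Gᶜ.indicator (fun _ => (F₁ + M) ^ 2) x with hgdef
  have hbound : ∀ᵐ x ∂P, ‖q x - qs x‖ ^ 2 ≤ g x := by
    filter_upwards [hae] with x hx
    obtain ⟨i, hqi, hxi⟩ := hq_mem x
    obtain ⟨j, hqsj, hxj⟩ := hqs_mem x
    by_cases hmem : x ∈ G
    · obtain ⟨j₀, hj₀⟩ := Set.mem_iUnion.mp hmem
      have hi : i = j₀ := by
        by_contra h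
        exact hx (Or.inr (Set.mem_iUnion.mpr ⟨i, Set.mem_iUnion.mpr ⟨j₀,
          Set.mem_iUnion.mpr ⟨h, hxi, hj₀.2⟩⟩⟩))
      have hj : j = j₀ := by
        by_contra h
        exact hx (Or.inl (Set.mem_iUnion.mpr ⟨j, Set.mem_iUnion.mpr ⟨j₀,
          Set.mem_iUnion.mpr ⟨h, hxj, hj₀.1⟩⟩⟩))
      have heq : ‖q x - qs x‖ = ‖cs j₀ - c j₀‖ := by
        rw [hqi, hqsj, hi, hj, norm_sub_rev]
      have h1 : ‖q x - qs x‖ ≤ F₁ := heq ▸ hF1le j₀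
      calc ‖q x - qs x‖ ^ 2 ≤ F₁ ^ 2 := pow_le_pow_left₀ (norm_nonneg _) h1 2
        _ ≤ g x := le_add_of_nonneg_right
            (Set.indicator_nonneg (fun _ _ => sq_nonneg _) x)
    · have hij : i ≠ j := by
        intro h
        exact hmem (Set.mem_iUnion.mpr ⟨j, hxj, h ▸ hxi⟩)
      have h1 : ‖q x - qs x‖ ≤ F₁ + M := by
        rw [hqi, hqsj]
        have htri := dist_triangle (c i) (cs i) (cs j)
        simp only [dist_eq_norm] at htri
        refine htri.trans (add_le_add ?_ (hMle i j hij))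
        rw [norm_sub_rev]; exact hF1le i
      calc ‖q x - qs x‖ ^ 2 ≤ (F₁ + M) ^ 2 := pow_le_pow_left₀ (norm_nonneg _) h1 2
        _ ≤ g x := by
            have hind : Gᶜ.indicator (fun _ => (F₁ + M) ^ 2) x = (F₁ + M) ^ 2 :=
              Set.indicator_of_mem (Set.mem_compl hmem) _
            show (F₁ + M) ^ 2 ≤ F₁ ^ 2 + Gᶜ.indicator (fun _ => (F₁ + M) ^ 2) x
            rw [hind]
            linarith [sq_nonneg F₁]
  have hgint : Integrable g P :=
    (integrable_const _).add ((integrable_const _).indicator hGmeas.compl)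
  have hfmeas : AEStronglyMeasurable (fun x => ‖q x - qs x‖ ^ 2) P :=
    ((hq.1.sub hqs.1.1).norm.pow_const 2).aestronglyMeasurable
  have hfint : Integrable (fun x => ‖q x - qs x‖ ^ 2) P :=
    hgint.mono' hfmeas (hbound.mono fun x hx => by
      rw [Real.norm_eq_abs, abs_of_nonneg (sq_nonneg _)]; exact hx)
  have hle := integral_mono_ae hfint hgint hbound
  have hgval : ∫ x, g x ∂P = F₁ ^ 2 + (P Gᶜ).toReal * (F₁ + M) ^ 2 := by
    rw [hgdef]
    rw [integral_add (integrable_const _) ((integrable_const _).indicator hGmeas.compl),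
        integral_const, integral_indicator_const _ hGmeas.compl]
    simp [measure_univ, smul_eq_mul, measureReal_def]
  rw [hgval] at hle
  rw [hF2id]
  exact hle
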